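/- Let ν be a finite signed Borel measure on ℝ satisfying conditions (A1) and (A2), and let D := {y ∈ ℝ : ν({y}) ≠ 0} be its (countable) set of atoms. Then for every x ∈ ℝ the family ((1 − ν({y}))/(1 + ν({y})))_{y ∈ D, y ≤ x} is multipliable (its infinite product converges unconditionally to a nonzero value), and there exist constants 0 < m ≤ M such that m ≤ ∏_{y ∈ D, y ≤ x} (1 − ν({y}))/(1 + ν({y})) ≤ M for every x ∈ ℝ. -/

import Mathlib

open MeasureTheory
open scoped ENNReal

/-- The value of a signed measure on a measurable set is bounded in absolute value by
the total variation. -/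
lemma aux_abs_apply_le_tv (ν : MeasureTheory.SignedMeasure ℝ) {i : Set ℝ}
    (hi : MeasurableSet i) : |ν i| ≤ (ν.totalVariation i).toReal := by
  conv_lhs => rw [← ν.toSignedMeasure_toJordanDecomposition]
  rw [MeasureTheory.JordanDecomposition.toSignedMeasure, VectorMeasure.sub_apply,
    Measure.toSignedMeasure_apply_measurable hi, Measure.toSignedMeasure_apply_measurable hi,
    MeasureTheory.SignedMeasure.totalVariation, Measure.add_apply,
    ENNReal.toReal_add (measure_ne_top _ _) (measure_ne_top _ _)]
  calc |(ν.toJordanDecomposition.posPart i).toReal - (ν.toJordanDecomposition.negPart i).toReal|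
      ≤ |(ν.toJordanDecomposition.posPart i).toReal| +
        |(ν.toJordanDecomposition.negPart i).toReal| := abs_sub _ _
    _ = (ν.toJordanDecomposition.posPart i).toReal +
        (ν.toJordanDecomposition.negPart i).toReal := by
        rw [abs_of_nonneg ENNReal.toReal_nonneg, abs_of_nonneg ENNReal.toReal_nonneg]

/-- Elementary logarithm bound: if `|u| ≤ 1/2` then `|log ((1-u)/(1+u))| ≤ 12 * |u|`. -/
lemma aux_log_bound {u : ℝ} (hu : |u| ≤ 1/2) :
    |Real.log ((1 - u) / (1 + u))| ≤ 12 * |u| := by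
  obtain ⟨hu1, hu2⟩ := abs_le.mp hu
  have h1 : (1:ℝ)/2 ≤ 1 + u := by linarith
  have h2 : (1:ℝ)/2 ≤ 1 - u := by linarith
  set f : ℝ := (1 - u) / (1 + u) with hf
  have hfpos : 0 < f := div_pos (by linarith) (by linarith)
  have hf1 : f - 1 = -2 * u / (1 + u) := by
    rw [hf, div_sub_one (by linarith)]
    ring
  have habsf1 : |f - 1| ≤ 4 * |u| := by
    rw [hf1, abs_div, abs_of_pos (show (0:ℝ) < 1 + u by linarith)]
    rw [div_le_iff₀ (show (0:ℝ) < 1 + u by linarith)]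
    have : |(-2 : ℝ) * u| = 2 * |u| := by
      rw [abs_mul]; norm_num
    rw [this]
    nlinarith [abs_nonneg u]
  have hub : Real.log f ≤ f - 1 := Real.log_le_sub_one_of_pos hfpos
  have hlb : 1 - f⁻¹ ≤ Real.log f := Real.one_sub_inv_le_log_of_pos hfpos
  have hf13 : (1:ℝ)/3 ≤ f := by
    rw [hf, le_div_iff₀ (show (0:ℝ) < 1 + u by linarith)]
    linarith
  have hfinv : f⁻¹ ≤ 3 := by
    rw [inv_le_comm₀ (by linarith) (by norm_num)]
    linarith
  have hfinvpos : 0 < f⁻¹ := inv_pos.mpr hfpos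
  have hkey : |Real.log f| ≤ 3 * |f - 1| := by
    rw [abs_le]
    constructor
    · -- -(3 |f-1|) ≤ log f, i.e. -log f ≤ 3|f-1|; -log f ≤ f⁻¹ - 1 = (1-f) f⁻¹
      have h3 : f⁻¹ - 1 = (1 - f) * f⁻¹ := by
        field_simp
      have h4 : (1 - f) * f⁻¹ ≤ |f - 1| * 3 := by
        calc (1 - f) * f⁻¹ ≤ |f - 1| * f⁻¹ := by
              apply mul_le_mul_of_nonneg_right _ (le_of_lt hfinvpos)
              rw [abs_sub_comm]
              exact le_abs_self _
          _ ≤ |f - 1| * 3 := mul_le_mul_of_nonneg_left hfinv (abs_nonneg _)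
      nlinarith
    · calc Real.log f ≤ f - 1 := hub
        _ ≤ |f - 1| := le_abs_self _
        _ ≤ 3 * |f - 1| := by nlinarith [abs_nonneg (f - 1)]
  calc |Real.log f| ≤ 3 * |f - 1| := hkey
    _ ≤ 3 * (4 * |u|) := by linarith
    _ = 12 * |u| := by ring

theorem multipliable_and_bounded_products (ν : MeasureTheory.SignedMeasure ℝ)
    (hA1 : ∀ a : ℝ, ν.totalVariation {a} < 1) :
    (∀ x : ℝ, Multipliable (fun y : {y : ℝ // ν {y} ≠ 0 ∧ y ≤ x} =>
        (1 - ν {(y : ℝ)}) / (1 + ν {(y : ℝ)}))) ∧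
    (∀ x : ℝ, (∏' y : {y : ℝ // ν {y} ≠ 0 ∧ y ≤ x},
        (1 - ν {(y : ℝ)}) / (1 + ν {(y : ℝ)})) ≠ 0) ∧
    (∃ m M : ℝ, 0 < m ∧ m ≤ M ∧ ∀ x : ℝ,
      m ≤ (∏' y : {y : ℝ // ν {y} ≠ 0 ∧ y ≤ x},
            (1 - ν {(y : ℝ)}) / (1 + ν {(y : ℝ)})) ∧
      (∏' y : {y : ℝ // ν {y} ≠ 0 ∧ y ≤ x},
        (1 - ν {(y : ℝ)}) / (1 + ν {(y : ℝ)})) ≤ M) := by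
  classical
  set μ : Measure ℝ := ν.totalVariation with hμ
  haveI : IsFiniteMeasure μ := by
    rw [hμ, MeasureTheory.SignedMeasure.totalVariation]; infer_instance
  set t : ℝ → ℝ := fun y => (μ {y}).toReal with ht
  set f : ℝ → ℝ := fun y => (1 - ν {y}) / (1 + ν {y}) with hfdef
  -- basic bounds
  have habs : ∀ y : ℝ, |ν {y}| ≤ t y :=
    fun y => aux_abs_apply_le_tv ν (measurableSet_singleton y)
  have hlt1 : ∀ y : ℝ, |ν {y}| < 1 := by
    intro y
    refine lt_of_le_of_lt (habs y) ?_
    have h := (ENNReal.toReal_lt_toReal (measure_ne_top μ _) (by norm_num)).mpr (hA1 y)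
    simpa using h
  have hfpos : ∀ y : ℝ, 0 < f y := by
    intro y
    obtain ⟨h1, h2⟩ := abs_lt.mp (hlt1 y)
    exact div_pos (by linarith) (by linarith)
  -- summability of the total variation of singletons over the atoms
  have htop : ∑' y : {y : ℝ // ν {y} ≠ 0}, μ {(y : ℝ)} ≠ ⊤ := by
    have hb : ∑' y : {y : ℝ // ν {y} ≠ 0}, μ {(y : ℝ)} ≤ μ Set.univ := by
      rw [ENNReal.tsum_eq_iSup_sum]
      refine iSup_le fun F => ?_
      have hdisj : (F : Set {y : ℝ // ν {y} ≠ 0}).PairwiseDisjoint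
          (fun y : {y : ℝ // ν {y} ≠ 0} => ({(y : ℝ)} : Set ℝ)) := by
        intro a _ b _ hab
        simp only [Set.disjoint_singleton_left, Set.mem_singleton_iff]
        exact fun h => hab (Subtype.ext h)
      rw [← measure_biUnion_finset hdisj (fun _ _ => measurableSet_singleton _)]
      exact measure_mono (Set.subset_univ _)
    exact ne_top_of_le_ne_top (measure_ne_top μ _) hb
  have hts : Summable (fun y : {y : ℝ // ν {y} ≠ 0} => t (y : ℝ)) :=
    ENNReal.summable_toReal htop
  -- eventually (cofinite) t y ≤ 1/2
  have hev : ∀ᶠ y : {y : ℝ // ν {y} ≠ 0} in Filter.cofinite, t (y : ℝ) ≤ 1/2 := by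
    have h0 := hts.tendsto_cofinite_zero
    exact (h0.eventually_lt_const (show (0:ℝ) < 1/2 by norm_num)).mono
      fun y hy => le_of_lt hy
  -- summability of |log f| over all atoms
  have hlogsum : Summable (fun y : {y : ℝ // ν {y} ≠ 0} => |Real.log (f (y : ℝ))|) := by
    refine Summable.of_norm_bounded_eventually (g := fun y => 12 * t (y : ℝ))
      (hts.mul_left 12) ?_
    refine hev.mono fun y hy => ?_
    have hu : |ν {(y : ℝ)}| ≤ 1/2 := le_trans (habs _) hy
    have := aux_log_bound hu
    calc ‖|Real.log (f (y : ℝ))|‖ = |Real.log (f (y : ℝ))| := by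
          rw [Real.norm_eq_abs, abs_abs]
      _ ≤ 12 * |ν {(y : ℝ)}| := this
      _ ≤ 12 * t (y : ℝ) := by nlinarith [habs (y : ℝ)]
  set S : ℝ := ∑' y : {y : ℝ // ν {y} ≠ 0}, |Real.log (f (y : ℝ))| with hS
  have hSnonneg : 0 ≤ S := tsum_nonneg fun y => abs_nonneg _
  -- for each x, work with the injection into the set of all atoms
  have key : ∀ x : ℝ,
      HasProd (fun y : {y : ℝ // ν {y} ≠ 0 ∧ y ≤ x} => f (y : ℝ))
        (Real.exp (∑' y : {y : ℝ // ν {y} ≠ 0 ∧ y ≤ x}, Real.log (f (y : ℝ)))) ∧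
      |∑' y : {y : ℝ // ν {y} ≠ 0 ∧ y ≤ x}, Real.log (f (y : ℝ))| ≤ S := by
    intro x
    set ι : {y : ℝ // ν {y} ≠ 0 ∧ y ≤ x} → {y : ℝ // ν {y} ≠ 0} :=
      fun y => ⟨(y : ℝ), y.2.1⟩ with hι
    have hιinj : Function.Injective ι := by
      intro a b hab
      simpa [hι, Subtype.ext_iff] using hab
    have habs_x : Summable (fun y : {y : ℝ // ν {y} ≠ 0 ∧ y ≤ x} =>
        |Real.log (f (y : ℝ))|) := by
      have := hlogsum.comp_injective hιinj
      exact this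
    have hlog_x : Summable (fun y : {y : ℝ // ν {y} ≠ 0 ∧ y ≤ x} =>
        Real.log (f (y : ℝ))) := habs_x.of_abs
    constructor
    · have heq : (Real.exp ∘ fun y : {y : ℝ // ν {y} ≠ 0 ∧ y ≤ x} =>
          Real.log (f (y : ℝ))) = fun y : {y : ℝ // ν {y} ≠ 0 ∧ y ≤ x} => f (y : ℝ) :=
        funext fun y => Real.exp_log (hfpos _)
      have h2 := hlog_x.hasSum.rexp
      rwa [heq] at h2
    · have h1 : |∑' y : {y : ℝ // ν {y} ≠ 0 ∧ y ≤ x}, Real.log (f (y : ℝ))| ≤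
          ∑' y : {y : ℝ // ν {y} ≠ 0 ∧ y ≤ x}, |Real.log (f (y : ℝ))| := by
        have := norm_tsum_le_tsum_norm (by simpa using habs_x :
          Summable fun y : {y : ℝ // ν {y} ≠ 0 ∧ y ≤ x} => ‖Real.log (f (y : ℝ))‖)
        simpa using this
      refine le_trans h1 ?_
      exact Summable.tsum_le_tsum_of_inj ι hιinj (fun c _ => abs_nonneg _)
        (fun y => le_refl _) habs_x hlogsum
  refine ⟨fun x => ⟨_, (key x).1⟩, ?_, ?_⟩
  · intro x
    rw [(key x).1.tprod_eq]
    exact Real.exp_ne_zero _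
  · refine ⟨Real.exp (-S), Real.exp S, Real.exp_pos _,
      Real.exp_le_exp.mpr (by linarith), fun x => ?_⟩
    rw [(key x).1.tprod_eq]
    obtain ⟨hl, hr⟩ := abs_le.mp (key x).2
    exact ⟨Real.exp_le_exp.mpr hl, Real.exp_le_exp.mpr hr⟩
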